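/- Suppose u_I and u_II both satisfy, for some t* ∈ (0,T], the energy identity E(u_i(t*)) + ½∫₀^{t*} (‖u̇_i‖²_{L²} + |∂F|²_{L²₊}(t, u_i(t))) dt − ∫₀^{t*} ⟨f(t), u̇_i(t)⟩ dt = E(u₀), with the same initial datum u₀, and suppose u_I(t*) ≠ u_II(t*). Then the midpoint curve u_♮ = ½(u_I + u_II) satisfies the strict inequality E(u_♮(t*)) + ½∫₀^{t*}(‖u̇_♮‖²_{L²} + |∂F|²_{L²₊}(t, u_♮(t))) dt − ∫₀^{t*} ⟨f(t), u̇_♮(t)⟩ dt < E(u₀). -/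

import Mathlib

open MeasureTheory

set_option maxHeartbeats 1000000

/-- The set whose supremum is the unilateral slope
`|∂F|_{L²₊}(t,w) = sup { −a(w,z) + ⟨f(t), z⟩ : z ∈ H¹₀, z ≥ 0, ‖z‖_{L²} ≤ 1 }`. -/
def slopeSet {α : Type*} [MeasurableSpace α] {μ : Measure α}
    {V : Type*} [NormedAddCommGroup V] [NormedSpace ℝ V]
    (ι : V →L[ℝ] Lp ℝ 2 μ) (a : V →L[ℝ] V →L[ℝ] ℝ) (ft : Lp ℝ 2 μ) (w : V) : Set ℝ :=
  {r : ℝ | ∃ z : V, 0 ≤ ι z ∧ ‖ι z‖ ≤ 1 ∧ r = -(a w z) + (inner ℝ ft (ι z) : ℝ)}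

/-- Strict convexity estimate behind uniqueness (Gigli's argument): if `u_I` and `u_II` both
satisfy the energy identity
`E(u_i(t*)) + ∫₀^{t*} (½‖u̇_i‖² + ½|∂F|²_{L²₊}(t,u_i)) − ∫₀^{t*} ⟨f, u̇_i⟩ = E(u₀)`
with the same initial datum `u₀`, and `u_I(t*) ≠ u_II(t*)`, then the midpoint curve
`u_♮ = ½(u_I + u_II)` (with speed `½(u̇_I + u̇_II)`) satisfies the corresponding strict
inequality `< E(u₀)`.  Here `E(w) = ½a(w,w)` with `a` coercive continuous symmetric. -/
theorem midpoint_strict_energy_inequality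
    {α : Type*} [MeasurableSpace α] (μ : Measure α)
    {V : Type*} [NormedAddCommGroup V] [NormedSpace ℝ V]
    (ι : V →L[ℝ] Lp ℝ 2 μ)
    (a : V →L[ℝ] V →L[ℝ] ℝ) (hsymm : ∀ u v : V, a u v = a v u)
    (c : ℝ) (hc : 0 < c) (hcoer : ∀ w : V, c * ‖w‖ ^ 2 ≤ a w w)
    (f : ℝ → Lp ℝ 2 μ) (tstar : ℝ) (htstar : 0 < tstar) (u₀ : V)
    (uI uII : ℝ → V) (duI duII : ℝ → Lp ℝ 2 μ)
    (hbddI : ∀ t ∈ Set.Ioc (0:ℝ) tstar, BddAbove (slopeSet ι a (f t) (uI t)))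
    (hbddII : ∀ t ∈ Set.Ioc (0:ℝ) tstar, BddAbove (slopeSet ι a (f t) (uII t)))
    (hmI : AEStronglyMeasurable duI (volume.restrict (Set.Ioc 0 tstar)))
    (hmII : AEStronglyMeasurable duII (volume.restrict (Set.Ioc 0 tstar)))
    (hintI : IntervalIntegrable (fun t => ‖duI t‖ ^ 2) volume 0 tstar)
    (hintII : IntervalIntegrable (fun t => ‖duII t‖ ^ 2) volume 0 tstar)
    (hslI : IntervalIntegrable (fun t => (sSup (slopeSet ι a (f t) (uI t))) ^ 2) volume 0 tstar)
    (hslII : IntervalIntegrable (fun t => (sSup (slopeSet ι a (f t) (uII t))) ^ 2) volume 0 tstar)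
    (hslM : IntervalIntegrable
      (fun t => (sSup (slopeSet ι a (f t) ((1/2 : ℝ) • (uI t + uII t)))) ^ 2) volume 0 tstar)
    (hfI : IntervalIntegrable (fun t => (inner ℝ (f t) (duI t) : ℝ)) volume 0 tstar)
    (hfII : IntervalIntegrable (fun t => (inner ℝ (f t) (duII t) : ℝ)) volume 0 tstar)
    (hEI : (1/2) * a (uI tstar) (uI tstar) +
        (∫ t in (0:ℝ)..tstar,
          ((1/2) * ‖duI t‖ ^ 2 + (1/2) * (sSup (slopeSet ι a (f t) (uI t))) ^ 2)) -
        (∫ t in (0:ℝ)..tstar, (inner ℝ (f t) (duI t) : ℝ)) = (1/2) * a u₀ u₀)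
    (hEII : (1/2) * a (uII tstar) (uII tstar) +
        (∫ t in (0:ℝ)..tstar,
          ((1/2) * ‖duII t‖ ^ 2 + (1/2) * (sSup (slopeSet ι a (f t) (uII t))) ^ 2)) -
        (∫ t in (0:ℝ)..tstar, (inner ℝ (f t) (duII t) : ℝ)) = (1/2) * a u₀ u₀)
    (hne : uI tstar ≠ uII tstar) :
    (1/2) * a ((1/2 : ℝ) • (uI tstar + uII tstar)) ((1/2 : ℝ) • (uI tstar + uII tstar)) +
        (∫ t in (0:ℝ)..tstar,
          ((1/2) * ‖(1/2 : ℝ) • (duI t + duII t)‖ ^ 2 +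
            (1/2) * (sSup (slopeSet ι a (f t) ((1/2 : ℝ) • (uI t + uII t)))) ^ 2)) -
        (∫ t in (0:ℝ)..tstar, (inner ℝ (f t) ((1/2 : ℝ) • (duI t + duII t)) : ℝ)) <
      (1/2) * a u₀ u₀ := by
  classical
  have expand : ∀ x y : V, a ((1/2 : ℝ) • (x + y)) ((1/2 : ℝ) • (x + y))
      = (1/4) * a x x + (1/4) * a x y + (1/4) * a y x + (1/4) * a y y := by
    intro x y
    simp only [_root_.map_smul, map_add, ContinuousLinearMap.add_apply,
      ContinuousLinearMap.smul_apply, smul_eq_mul]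
    ring
  set xI := uI tstar with hxI
  set xII := uII tstar with hxII
  -- zero is in every slope set
  have hzero : ∀ (ft : Lp ℝ 2 μ) (w : V), (0:ℝ) ∈ slopeSet ι a ft w := by
    intro ft w
    refine ⟨0, ?_, ?_, ?_⟩ <;> simp
  set sI : ℝ → ℝ := fun t => sSup (slopeSet ι a (f t) (uI t)) with hsIdef
  set sII : ℝ → ℝ := fun t => sSup (slopeSet ι a (f t) (uII t)) with hsIIdef
  set sM : ℝ → ℝ := fun t => sSup (slopeSet ι a (f t) ((1/2 : ℝ) • (uI t + uII t))) with hsMdef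
  have hsInn : ∀ t ∈ Set.Ioc (0:ℝ) tstar, 0 ≤ sI t := fun t ht =>
    le_csSup (hbddI t ht) (hzero _ _)
  have hsIInn : ∀ t ∈ Set.Ioc (0:ℝ) tstar, 0 ≤ sII t := fun t ht =>
    le_csSup (hbddII t ht) (hzero _ _)
  have hexp : ∀ (t : ℝ) (z : V), a ((1/2 : ℝ) • (uI t + uII t)) z
      = (1/2) * a (uI t) z + (1/2) * a (uII t) z := by
    intro t z
    simp only [_root_.map_smul, map_add, ContinuousLinearMap.add_apply,
      ContinuousLinearMap.smul_apply, smul_eq_mul]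
    ring
  -- elements of midpoint slope set are bounded by the average of the sups
  have hel : ∀ t ∈ Set.Ioc (0:ℝ) tstar, ∀ r ∈ slopeSet ι a (f t) ((1/2 : ℝ) • (uI t + uII t)),
      r ≤ (1/2) * sI t + (1/2) * sII t := by
    rintro t ht r ⟨z, hz0, hz1, rfl⟩
    have h1 : -(a (uI t) z) + (inner ℝ (f t) (ι z) : ℝ) ≤ sI t :=
      le_csSup (hbddI t ht) ⟨z, hz0, hz1, rfl⟩
    have h2 : -(a (uII t) z) + (inner ℝ (f t) (ι z) : ℝ) ≤ sII t :=
      le_csSup (hbddII t ht) ⟨z, hz0, hz1, rfl⟩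
    rw [hexp t z]; linarith
  have hMle : ∀ t ∈ Set.Ioc (0:ℝ) tstar, sM t ≤ (1/2) * sI t + (1/2) * sII t := by
    intro t ht
    apply Real.sSup_le (hel t ht)
    have := hsInn t ht; have := hsIInn t ht; linarith
  have hsMnn : ∀ t ∈ Set.Ioc (0:ℝ) tstar, 0 ≤ sM t := by
    intro t ht
    exact le_csSup ⟨(1/2) * sI t + (1/2) * sII t, fun r hr => hel t ht r hr⟩ (hzero _ _)
  -- squared slope convexity pointwise
  have hsq : ∀ t ∈ Set.Ioc (0:ℝ) tstar,
      (sM t) ^ 2 ≤ (1/2) * (sI t) ^ 2 + (1/2) * (sII t) ^ 2 := by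
    intro t ht
    have h1 := hMle t ht
    have h2 := hsMnn t ht
    have h3 := hsInn t ht
    have h4 := hsIInn t ht
    nlinarith [sq_nonneg (sI t - sII t)]
  -- pointwise norm convexity
  have hnormsq : ∀ t, ‖(1/2 : ℝ) • (duI t + duII t)‖ ^ 2
      ≤ (1/2) * ‖duI t‖ ^ 2 + (1/2) * ‖duII t‖ ^ 2 := by
    intro t
    have h1 : ‖(1/2 : ℝ) • (duI t + duII t)‖ ≤ (1/2) * (‖duI t‖ + ‖duII t‖) := by
      rw [norm_smul]
      have := norm_add_le (duI t) (duII t)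
      simp only [Real.norm_eq_abs]
      rw [abs_of_pos (by norm_num : (0:ℝ) < 1/2)]
      nlinarith
    have h0 : (0:ℝ) ≤ ‖(1/2 : ℝ) • (duI t + duII t)‖ := norm_nonneg _
    nlinarith [sq_nonneg (‖duI t‖ - ‖duII t‖), norm_nonneg (duI t), norm_nonneg (duII t)]
  have hle : (0:ℝ) ≤ tstar := htstar.le
  have hIntI : IntegrableOn (fun t => ‖duI t‖ ^ 2) (Set.Ioc 0 tstar) volume :=
    (intervalIntegrable_iff_integrableOn_Ioc_of_le hle).mp hintI
  have hIntII : IntegrableOn (fun t => ‖duII t‖ ^ 2) (Set.Ioc 0 tstar) volume :=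
    (intervalIntegrable_iff_integrableOn_Ioc_of_le hle).mp hintII
  have hslIon : IntegrableOn (fun t => (sI t) ^ 2) (Set.Ioc 0 tstar) volume :=
    (intervalIntegrable_iff_integrableOn_Ioc_of_le hle).mp hslI
  have hslIIon : IntegrableOn (fun t => (sII t) ^ 2) (Set.Ioc 0 tstar) volume :=
    (intervalIntegrable_iff_integrableOn_Ioc_of_le hle).mp hslII
  have hslMon : IntegrableOn (fun t => (sM t) ^ 2) (Set.Ioc 0 tstar) volume :=
    (intervalIntegrable_iff_integrableOn_Ioc_of_le hle).mp hslM
  have hmM : AEStronglyMeasurable (fun t => (1/2 : ℝ) • (duI t + duII t))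
      (volume.restrict (Set.Ioc 0 tstar)) := (hmI.add hmII).const_smul (1/2 : ℝ)
  have hIntM : IntegrableOn (fun t => ‖(1/2 : ℝ) • (duI t + duII t)‖ ^ 2)
      (Set.Ioc 0 tstar) volume := by
    refine Integrable.mono' (hIntI.add hIntII) (hmM.norm.pow 2) ?_
    filter_upwards with t
    have := hnormsq t
    simp only [Pi.add_apply]
    rw [Real.norm_eq_abs, abs_of_nonneg (by positivity)]
    have h1 : (0:ℝ) ≤ ‖duI t‖ ^ 2 := by positivity
    have h2 : (0:ℝ) ≤ ‖duII t‖ ^ 2 := by positivity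
    linarith
  have hintegrandM : IntegrableOn
      (fun t => (1/2) * ‖(1/2 : ℝ) • (duI t + duII t)‖ ^ 2 + (1/2) * (sM t) ^ 2)
      (Set.Ioc 0 tstar) volume := (hIntM.const_mul _).add (hslMon.const_mul _)
  have hIIon : IntegrableOn (fun t => (1/2) * ‖duI t‖ ^ 2 + (1/2) * (sI t) ^ 2)
      (Set.Ioc 0 tstar) volume := (hIntI.const_mul _).add (hslIon.const_mul _)
  have hIIIon : IntegrableOn (fun t => (1/2) * ‖duII t‖ ^ 2 + (1/2) * (sII t) ^ 2)
      (Set.Ioc 0 tstar) volume := (hIntII.const_mul _).add (hslIIon.const_mul _)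
  have hmono : (∫ t in Set.Ioc (0:ℝ) tstar,
        ((1/2) * ‖(1/2 : ℝ) • (duI t + duII t)‖ ^ 2 + (1/2) * (sM t) ^ 2))
      ≤ ∫ t in Set.Ioc (0:ℝ) tstar,
        ((1/2) * ((1/2) * ‖duI t‖ ^ 2 + (1/2) * (sI t) ^ 2)
          + (1/2) * ((1/2) * ‖duII t‖ ^ 2 + (1/2) * (sII t) ^ 2)) := by
    refine setIntegral_mono_on hintegrandM
      ((hIIon.const_mul _).add (hIIIon.const_mul _)) measurableSet_Ioc ?_
    intro t ht
    have h1 := hnormsq t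
    have h2 := hsq t ht
    linarith
  have hsplit : (∫ t in Set.Ioc (0:ℝ) tstar,
        ((1/2) * ((1/2) * ‖duI t‖ ^ 2 + (1/2) * (sI t) ^ 2)
          + (1/2) * ((1/2) * ‖duII t‖ ^ 2 + (1/2) * (sII t) ^ 2)))
      = (1/2) * (∫ t in Set.Ioc (0:ℝ) tstar, ((1/2) * ‖duI t‖ ^ 2 + (1/2) * (sI t) ^ 2))
        + (1/2) * (∫ t in Set.Ioc (0:ℝ) tstar,
            ((1/2) * ‖duII t‖ ^ 2 + (1/2) * (sII t) ^ 2)) := by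
    rw [integral_add (hIIon.const_mul _) (hIIIon.const_mul _),
      integral_const_mul, integral_const_mul]
  have hIM : (∫ t in (0:ℝ)..tstar,
        ((1/2) * ‖(1/2 : ℝ) • (duI t + duII t)‖ ^ 2 + (1/2) * (sM t) ^ 2))
      ≤ (1/2) * (∫ t in (0:ℝ)..tstar, ((1/2) * ‖duI t‖ ^ 2 + (1/2) * (sI t) ^ 2))
        + (1/2) * (∫ t in (0:ℝ)..tstar, ((1/2) * ‖duII t‖ ^ 2 + (1/2) * (sII t) ^ 2)) := by
    rw [intervalIntegral.integral_of_le hle, intervalIntegral.integral_of_le hle,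
      intervalIntegral.integral_of_le hle]
    calc _ ≤ _ := hmono
      _ = _ := hsplit
  -- force term splits exactly
  have hF : (∫ t in (0:ℝ)..tstar, (inner ℝ (f t) ((1/2 : ℝ) • (duI t + duII t)) : ℝ))
      = (1/2) * (∫ t in (0:ℝ)..tstar, (inner ℝ (f t) (duI t) : ℝ))
        + (1/2) * (∫ t in (0:ℝ)..tstar, (inner ℝ (f t) (duII t) : ℝ)) := by
    have heq : ∀ t, (inner ℝ (f t) ((1/2 : ℝ) • (duI t + duII t)) : ℝ)
        = (1/2) * (inner ℝ (f t) (duI t) : ℝ) + (1/2) * (inner ℝ (f t) (duII t) : ℝ) := by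
      intro t
      rw [real_inner_smul_right, inner_add_right]
      ring
    rw [intervalIntegral.integral_congr (fun t _ => heq t),
      intervalIntegral.integral_add (hfI.const_mul _) (hfII.const_mul _),
      intervalIntegral.integral_const_mul, intervalIntegral.integral_const_mul]
  -- energy expansion and coercivity
  have hEm : a ((1/2 : ℝ) • (xI + xII)) ((1/2 : ℝ) • (xI + xII))
      = (1/4) * a xI xI + (1/2) * a xI xII + (1/4) * a xII xII := by
    rw [expand xI xII, hsymm xII xI]; ring
  have hdne : xI - xII ≠ 0 := sub_ne_zero.mpr hne
  have hdpos : 0 < a (xI - xII) (xI - xII) := by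
    have hn : 0 < ‖xI - xII‖ := norm_pos_iff.mpr hdne
    have h1 : 0 < c * ‖xI - xII‖ ^ 2 := by positivity
    exact lt_of_lt_of_le h1 (hcoer _)
  have hdexp : a (xI - xII) (xI - xII) = a xI xI - 2 * a xI xII + a xII xII := by
    simp only [map_sub, ContinuousLinearMap.sub_apply]
    rw [hsymm xII xI]; ring
  rw [hF]
  have goal2 : (1/2) * a ((1/2 : ℝ) • (xI + xII)) ((1/2 : ℝ) • (xI + xII))
      + (∫ t in (0:ℝ)..tstar,
          ((1/2) * ‖(1/2 : ℝ) • (duI t + duII t)‖ ^ 2 + (1/2) * (sM t) ^ 2))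
      - ((1/2) * (∫ t in (0:ℝ)..tstar, (inner ℝ (f t) (duI t) : ℝ))
        + (1/2) * (∫ t in (0:ℝ)..tstar, (inner ℝ (f t) (duII t) : ℝ)))
      < (1/2) * a u₀ u₀ := by
    rw [hEm]
    have h8 : 0 < (1/8) * a (xI - xII) (xI - xII) := by linarith
    rw [hdexp] at h8
    linarith [hIM, hEI, hEII]
  exact goal2
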